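/- Let phi = (phi_i)_{i>=0} and x be indeterminates. Define the lower-Hessenberg matrix P by p_{ij} = (i!/(j-1)!) * phi_{i-j+1} for 1 <= j <= i+1 and p_{ij} = 0 otherwise, and let B_x be the matrix with (B_x)_{nk} = binomial(n,k) x^(n-k). Then B_x^{-1} P B_x = P (I + x * Delta^T), where Delta is the matrix with 1's on the superdiagonal and 0 elsewhere. -/

import Mathlib

/-- Product of infinite matrices, defined via `finsum` (a genuine finite sum
whenever the left factor is row-finite or the right factor is column-finite;
all matrices appearing below are row- and column-finite). -/
noncomputable def fMul {R : Type*} [CommRing R] (P Q : ℕ → ℕ → R) : ℕ → ℕ → R :=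
  fun i k => ∑ᶠ j, P i j * Q j k


open Finset


lemma triple_choose (i m k : ℕ) :
    i.choose (m + k) * (m + k).choose m = i.choose m * (i - m).choose k := by
  rcases le_or_gt (m + k) i with h | h
  · rw [Nat.choose_mul (Nat.le_add_right m k), Nat.add_sub_cancel_left]
  · rw [Nat.choose_eq_zero_of_lt h, Nat.zero_mul]
    rcases le_or_gt m i with h2 | h2
    · rw [Nat.choose_eq_zero_of_lt (by omega : i - m < k), Nat.mul_zero]
    · rw [Nat.choose_eq_zero_of_lt h2, Nat.zero_mul]

lemma key_nat (i m k : ℕ) :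
    i.choose m * (i + 1 - m).choose (k + 1)
      = i.choose (m + k) * (m + k).choose m + i.choose (m + k + 1) * (m + k + 1).choose m := by
  rcases le_or_gt m i with hm | hm
  · have h1 : i + 1 - m = (i - m) + 1 := by omega
    rw [h1, Nat.choose_succ_succ, Nat.mul_add, triple_choose,
      show m + k + 1 = m + (k + 1) by ring, triple_choose]
  · rw [Nat.choose_eq_zero_of_lt hm, Nat.choose_eq_zero_of_lt (by omega : i < m + k),
      Nat.choose_eq_zero_of_lt (by omega : i < m + k + 1)]
    simp

lemma key_nat' (n t k : ℕ) :
    n.descFactorial t * (n + 1 - t).choose (k + 1)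
      = n.choose (t + k) * (t + k).descFactorial t
        + n.choose (t + k + 1) * (t + k + 1).descFactorial t := by
  simp only [Nat.descFactorial_eq_factorial_mul_choose]
  rw [Nat.mul_assoc, key_nat n t k]
  ring

lemma key0_nat (n m : ℕ) : n.descFactorial m = n.choose m * m.descFactorial m := by
  rw [Nat.descFactorial_eq_factorial_mul_choose, Nat.descFactorial_self]
  ring

lemma binv_sum {R : Type*} [CommRing R] (x : R) (i l : ℕ) :
    ∑ j ∈ range (i + 1), ((i.choose j : R) * (-x) ^ (i - j)) * ((j.choose l : R) * x ^ (j - l))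
      = if i = l then 1 else 0 := by
  rcases le_or_gt l i with hl | hl
  · have hsub : Finset.Ico l (i + 1) ⊆ range (i + 1) := by
      intro a ha; simp only [Finset.mem_Ico, Finset.mem_range] at *; omega
    rw [← Finset.sum_subset hsub (by
      intro a ha hna
      simp only [Finset.mem_Ico, Finset.mem_range] at *
      rw [Nat.choose_eq_zero_of_lt (by omega : a < l)]
      push_cast; ring)]
    rw [Finset.sum_Ico_eq_sum_range]
    have hr : i + 1 - l = (i - l) + 1 := by omega
    have hterm : ∀ t ∈ range ((i - l) + 1),
        ((i.choose (l + t) : R) * (-x) ^ (i - (l + t))) * (((l + t).choose l : R) * x ^ (l + t - l))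
          = ((i.choose l : R)) * (x ^ t * (-x) ^ ((i - l) - t) * ((i - l).choose t : R)) := by
      intro t ht
      simp only [Finset.mem_range] at ht
      have h2 : i.choose (l + t) * (l + t).choose l = i.choose l * (i - l).choose t :=
        triple_choose i l t
      have h3 : l + t - l = t := by omega
      have h4 : i - (l + t) = (i - l) - t := by omega
      rw [h3, h4]
      calc ((i.choose (l + t) : R) * (-x) ^ ((i - l) - t)) * (((l + t).choose l : R) * x ^ t)
          = ((i.choose (l + t) * (l + t).choose l : ℕ) : R) * ((-x) ^ ((i - l) - t) * x ^ t) := by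
            push_cast; ring
        _ = _ := by rw [h2]; push_cast; ring
    rw [hr, Finset.sum_congr rfl hterm, ← Finset.mul_sum, ← add_pow x (-x) (i - l)]
    have : x + -x = 0 := by ring
    rw [this, zero_pow_eq]
    rcases eq_or_lt_of_le hl with he | hlt
    · subst he; simp
    · rw [if_neg (by omega : ¬ i - l = 0), if_neg (by omega : ¬ i = l)]
      simp
  · have : ∀ j ∈ range (i + 1), ((i.choose j : R) * (-x) ^ (i - j)) * ((j.choose l : R) * x ^ (j - l)) = 0 := by
      intro j hj
      simp only [Finset.mem_range] at hj
      rw [Nat.choose_eq_zero_of_lt (by omega : j < l)]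
      push_cast; ring
    rw [Finset.sum_congr rfl this, Finset.sum_const, smul_zero, if_neg (by omega)]

lemma core {R : Type*} [CommRing R] (φ : ℕ → R) (x : R) (P Bx : ℕ → ℕ → R)
    (hP : ∀ i j : ℕ, P i j =
      if 1 ≤ j ∧ j ≤ i + 1 then (Nat.descFactorial i (i - (j - 1)) : R) * φ (i + 1 - j)
      else 0)
    (hBx : ∀ n k : ℕ, Bx n k = (Nat.choose n k : R) * x ^ (n - k)) (n k : ℕ) :
    (∑ᶠ j, P n j * Bx j k) = ∑ l ∈ range (n + 1), Bx n l * (P l k + x * P l (k + 1)) := by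
  have hPz : ∀ i j, i + 1 < j → P i j = 0 := fun i j h => by rw [hP, if_neg (by omega)]
  have hL : (∑ᶠ j, P n j * Bx j k)
      = ∑ m ∈ range (n + 1),
          (Nat.descFactorial n m : R) * φ m
            * ((Nat.choose (n + 1 - m) k : R) * x ^ (n + 1 - m - k)) := by
    rw [finsum_eq_finset_sum_of_support_subset _ (s := range (n + 2)) (by
      intro j hj
      simp only [Function.mem_support] at hj
      simp only [coe_range, Set.mem_Iio]
      by_contra h
      exact hj (by rw [hPz n j (by omega), zero_mul]))]
    have hrefl := Finset.sum_range_reflect (fun j => P n j * Bx j k) (n + 2)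
    rw [← hrefl]
    simp only [show ∀ j : ℕ, n + 2 - 1 - j = n + 1 - j from fun j => by omega]
    rw [Finset.sum_range_succ, show n + 1 - (n + 1) = 0 by omega, hP n 0,
      if_neg (by omega), zero_mul, add_zero]
    refine Finset.sum_congr rfl fun m hm => ?_
    simp only [mem_range] at hm
    rw [hP, hBx, if_pos (by omega : 1 ≤ n + 1 - m ∧ n + 1 - m ≤ n + 1),
      show n - (n + 1 - m - 1) = m by omega, show n + 1 - (n + 1 - m) = m by omega]
  rw [hL]
  rw [show (∑ l ∈ range (n + 1), Bx n l * (P l k + x * P l (k + 1)))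
      = (∑ l ∈ range (n + 1), Bx n l * P l k)
        + ∑ l ∈ range (n + 1), Bx n l * (x * P l (k + 1)) by
    rw [← Finset.sum_add_distrib]; exact Finset.sum_congr rfl fun l _ => by ring]
  cases k with
  | zero =>
    have h1 : ∑ l ∈ range (n + 1), Bx n l * P l 0 = 0 :=
      Finset.sum_eq_zero fun l _ => by rw [hP, if_neg (by omega), mul_zero]
    rw [h1, zero_add]
    refine Finset.sum_congr rfl fun m hm => ?_
    simp only [mem_range] at hm
    rw [hBx, hP, if_pos (by omega : 1 ≤ 1 ∧ 1 ≤ m + 1), show m - (1 - 1) = m by omega,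
      show m + 1 - 1 = m by omega, Nat.choose_zero_right,
      show n + 1 - m - 0 = (n - m) + 1 by omega, pow_succ]
    have hk0 : ((Nat.descFactorial n m : ℕ) : R)
        = ((Nat.choose n m : ℕ) : R) * ((Nat.descFactorial m m : ℕ) : R) := by
      rw [← Nat.cast_mul, key0_nat n m]
    rw [hk0]; ring
  | succ k₀ =>
    by_cases hk₀ : k₀ ≤ n
    · set N := n - k₀ with hN
      have hLr : (∑ m ∈ range (n + 1),
            (Nat.descFactorial n m : R) * φ m
              * ((Nat.choose (n + 1 - m) (k₀ + 1) : R) * x ^ (n + 1 - m - (k₀ + 1))))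
          = ∑ m ∈ range (N + 1),
            (Nat.descFactorial n m : R) * φ m
              * ((Nat.choose (n + 1 - m) (k₀ + 1) : R) * x ^ (n + 1 - m - (k₀ + 1))) := by
        refine (Finset.sum_subset (Finset.range_subset_range.mpr (by omega)) fun m hm hnm => ?_).symm
        simp only [mem_range] at hm hnm
        rw [Nat.choose_eq_zero_of_lt (by omega : n + 1 - m < k₀ + 1)]
        push_cast; ring
      have hS1 : (∑ l ∈ range (n + 1), Bx n l * P l (k₀ + 1))
          = ∑ t ∈ range (N + 1), Bx n (k₀ + t) * P (k₀ + t) (k₀ + 1) := by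
        rw [← Finset.sum_subset
          (show Finset.Ico k₀ (n + 1) ⊆ range (n + 1) by
            intro a ha; simp only [Finset.mem_Ico, mem_range] at *; omega)
          (fun l hl hnl => by
            simp only [mem_range, Finset.mem_Ico] at hl hnl
            rw [hP, if_neg (by omega), mul_zero]),
          Finset.sum_Ico_eq_sum_range, show n + 1 - k₀ = N + 1 by omega]
      have hS2 : (∑ l ∈ range (n + 1), Bx n l * (x * P l (k₀ + 2)))
          = ∑ t ∈ range (N + 1), Bx n (k₀ + 1 + t) * (x * P (k₀ + 1 + t) (k₀ + 2)) := by
        rw [← Finset.sum_subset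
          (show Finset.Ico (k₀ + 1) (n + 1) ⊆ range (n + 1) by
            intro a ha; simp only [Finset.mem_Ico, mem_range] at *; omega)
          (fun l hl hnl => by
            simp only [mem_range, Finset.mem_Ico] at hl hnl
            rw [hP, if_neg (by omega), mul_zero, mul_zero]),
          Finset.sum_Ico_eq_sum_range, show n + 1 - (k₀ + 1) = N by omega,
          Finset.sum_range_succ, hBx n (k₀ + 1 + N),
          Nat.choose_eq_zero_of_lt (by omega : n < k₀ + 1 + N)]
        push_cast; ring
      rw [hLr, hS1, hS2, ← Finset.sum_add_distrib]
      refine Finset.sum_congr rfl fun t ht => ?_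
      simp only [mem_range] at ht
      rw [hBx n (k₀ + t), hBx n (k₀ + 1 + t), hP (k₀ + t) (k₀ + 1), hP (k₀ + 1 + t) (k₀ + 2),
        if_pos (by omega : 1 ≤ k₀ + 1 ∧ k₀ + 1 ≤ k₀ + t + 1),
        if_pos (by omega : 1 ≤ k₀ + 2 ∧ k₀ + 2 ≤ k₀ + 1 + t + 1),
        show k₀ + t - (k₀ + 1 - 1) = t by omega, show k₀ + t + 1 - (k₀ + 1) = t by omega,
        show k₀ + 1 + t - (k₀ + 2 - 1) = t by omega,
        show k₀ + 1 + t + 1 - (k₀ + 2) = t by omega,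
        show k₀ + 1 + t = k₀ + t + 1 by omega]
      by_cases hb : k₀ + t + 1 ≤ n
      · have hk := key_nat' n t k₀
        rw [Nat.add_comm t k₀] at hk
        have hkR : ((Nat.descFactorial n t : ℕ) : R) * ((Nat.choose (n + 1 - t) (k₀ + 1) : ℕ) : R)
            = ((Nat.choose n (k₀ + t) : ℕ) : R) * ((Nat.descFactorial (k₀ + t) t : ℕ) : R)
              + ((Nat.choose n (k₀ + t + 1) : ℕ) : R)
                * ((Nat.descFactorial (k₀ + t + 1) t : ℕ) : R) := by
          exact_mod_cast congrArg (Nat.cast : ℕ → R) hk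
        rw [show n + 1 - t - (k₀ + 1) = (n - (k₀ + t + 1)) + 1 by omega,
          show n - (k₀ + t) = (n - (k₀ + t + 1)) + 1 by omega, pow_succ]
        linear_combination (φ t * (x ^ (n - (k₀ + t + 1)) * x)) * hkR
      · have hc : Nat.choose n (k₀ + t) = 1 := by
          rw [show k₀ + t = n by omega, Nat.choose_self]
        have hd : Nat.descFactorial (k₀ + t) t = Nat.descFactorial n t := by
          rw [show k₀ + t = n by omega]
        rw [Nat.choose_eq_zero_of_lt (by omega : n < k₀ + t + 1), hc, hd,
          show n + 1 - t = k₀ + 1 by omega, Nat.choose_self,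
          show k₀ + 1 - (k₀ + 1) = 0 by omega, show n - (k₀ + t) = 0 by omega]
        push_cast; ring
    · have h1 : (∑ l ∈ range (n + 1), Bx n l * P l (k₀ + 1)) = 0 :=
        Finset.sum_eq_zero fun l hl => by
          simp only [mem_range] at hl
          rw [hP, if_neg (by omega), mul_zero]
      have h2 : (∑ l ∈ range (n + 1), Bx n l * (x * P l (k₀ + 2))) = 0 :=
        Finset.sum_eq_zero fun l hl => by
          simp only [mem_range] at hl
          rw [hP, if_neg (by omega), mul_zero, mul_zero]
      rw [h1, h2, add_zero]
      refine Finset.sum_eq_zero fun m hm => ?_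
      simp only [mem_range] at hm
      rw [Nat.choose_eq_zero_of_lt (by omega : n + 1 - m < k₀ + 1)]
      push_cast; ring

/-- Let `φ = (φ_i)` and `x` be indeterminates (here: arbitrary elements of a
commutative ring).  Let `P` be the lower-Hessenberg matrix with
`p_{ij} = (i!/(j-1)!) φ_{i-j+1}` for `1 ≤ j ≤ i+1` and `p_{ij} = 0` otherwise,
and let `B_x` be the binomial matrix `(B_x)_{nk} = binomial(n,k) x^{n-k}`
(unit-lower-triangular, hence invertible).  If `Bxinv` is a two-sided inverse of
`B_x`, then `B_x⁻¹ P B_x = P (I + x Δᵀ)`, where `Δᵀ` is the matrix with 1's on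
the subdiagonal and 0 elsewhere. -/
theorem BxInv_P_Bx {R : Type*} [CommRing R] (φ : ℕ → R) (x : R)
    (P : ℕ → ℕ → R)
    (hP : ∀ i j : ℕ, P i j =
      if 1 ≤ j ∧ j ≤ i + 1 then (Nat.descFactorial i (i - (j - 1)) : R) * φ (i + 1 - j)
      else 0)
    (Bx : ℕ → ℕ → R) (hBx : ∀ n k : ℕ, Bx n k = (Nat.choose n k : R) * x ^ (n - k))
    (Bxinv : ℕ → ℕ → R)
    (hinv₁ : fMul Bxinv Bx = fun i j => if i = j then 1 else 0)
    (hinv₂ : fMul Bx Bxinv = fun i j => if i = j then 1 else 0) :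
    fMul Bxinv (fMul P Bx)
      = fMul P (fun i j => if i = j then 1 else if i = j + 1 then x else 0) := by
  have hdelta : ∀ i l : ℕ,
      (∑ j ∈ range (i + 1), ((i.choose j : R) * (-x) ^ (i - j)) * Bx j l)
        = if i = l then 1 else 0 := by
    intro i l
    simp only [hBx]
    exact binv_sum x i l
  -- Bxinv is the binomial matrix at -x
  have hBxinv : ∀ i k : ℕ, Bxinv i k = (i.choose k : R) * (-x) ^ (i - k) := by
    intro i k
    have h0 : ∀ j, j ≤ i →
        (fMul Bx Bxinv) j k = ∑ l ∈ range (i + 1), Bx j l * Bxinv l k := by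
      intro j hj
      apply finsum_eq_finset_sum_of_support_subset
      intro l hl
      simp only [Function.mem_support] at hl
      simp only [coe_range, Set.mem_Iio]
      by_contra h
      apply hl
      rw [hBx, Nat.choose_eq_zero_of_lt (by omega : j < l)]
      push_cast; ring
    calc Bxinv i k
        = ∑ l ∈ range (i + 1), (if i = l then (1 : R) else 0) * Bxinv l k := by
          simp [Finset.sum_ite_eq]
      _ = ∑ l ∈ range (i + 1),
            (∑ j ∈ range (i + 1), ((i.choose j : R) * (-x) ^ (i - j)) * Bx j l)
              * Bxinv l k := by
          exact Finset.sum_congr rfl fun l _ => by rw [hdelta]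
      _ = ∑ j ∈ range (i + 1), ((i.choose j : R) * (-x) ^ (i - j))
            * ∑ l ∈ range (i + 1), Bx j l * Bxinv l k := by
          simp only [Finset.sum_mul, Finset.mul_sum]
          rw [Finset.sum_comm]
          exact Finset.sum_congr rfl fun l _ => Finset.sum_congr rfl fun j _ => by ring
      _ = ∑ j ∈ range (i + 1), ((i.choose j : R) * (-x) ^ (i - j))
            * (if j = k then 1 else 0) := by
          refine Finset.sum_congr rfl fun j hj => ?_
          simp only [mem_range] at hj
          rw [← h0 j (by omega)]
          have := congrFun (congrFun hinv₂ j) k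
          rw [this]
      _ = (i.choose k : R) * (-x) ^ (i - k) := by
          simp only [mul_ite, mul_one, mul_zero, Finset.sum_ite_eq', mem_range]
          rcases le_or_gt k i with h | h
          · rw [if_pos (by omega)]
          · rw [if_neg (by omega), Nat.choose_eq_zero_of_lt h]
            push_cast; ring
  funext i k
  -- RHS evaluation
  have hRHS : fMul P (fun i j => if i = j then 1 else if i = j + 1 then x else 0) i k
      = P i k + x * P i (k + 1) := by
    show (∑ᶠ j, P i j * (if j = k then 1 else if j = k + 1 then x else 0)) = _
    rw [finsum_eq_finset_sum_of_support_subset _ (s := {k, k + 1}) (by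
      intro j hj
      simp only [Function.mem_support] at hj
      simp only [coe_insert, coe_singleton, Set.mem_insert_iff, Set.mem_singleton_iff]
      by_contra h
      push_neg at h
      exact hj (by rw [if_neg h.1, if_neg h.2, mul_zero]))]
    rw [Finset.sum_insert (by simp), Finset.sum_singleton, if_pos rfl,
      if_neg (by omega : ¬ k + 1 = k), if_pos rfl]
    ring
  rw [hRHS]
  show (∑ᶠ j, Bxinv i j * (fMul P Bx) j k) = _
  rw [finsum_eq_finset_sum_of_support_subset _ (s := range (i + 1)) (by
    intro j hj
    simp only [Function.mem_support] at hj
    simp only [coe_range, Set.mem_Iio]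
    by_contra h
    apply hj
    rw [hBxinv, Nat.choose_eq_zero_of_lt (by omega : i < j)]
    push_cast; ring)]
  calc ∑ j ∈ range (i + 1), Bxinv i j * (fMul P Bx) j k
      = ∑ j ∈ range (i + 1), ((i.choose j : R) * (-x) ^ (i - j))
          * ∑ l ∈ range (i + 1), Bx j l * (P l k + x * P l (k + 1)) := by
        refine Finset.sum_congr rfl fun j hj => ?_
        simp only [mem_range] at hj
        rw [hBxinv]
        congr 1
        rw [show (fMul P Bx) j k = ∑ᶠ l, P j l * Bx l k from rfl, core φ x P Bx hP hBx j k]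
        exact Finset.sum_subset (Finset.range_subset_range.mpr (by omega)) fun l hl hnl => by
          simp only [mem_range] at hl hnl
          rw [hBx, Nat.choose_eq_zero_of_lt (by omega : j < l)]
          push_cast; ring
    _ = ∑ l ∈ range (i + 1),
          (∑ j ∈ range (i + 1), ((i.choose j : R) * (-x) ^ (i - j)) * Bx j l)
            * (P l k + x * P l (k + 1)) := by
        simp only [Finset.sum_mul, Finset.mul_sum]
        rw [Finset.sum_comm]
        exact Finset.sum_congr rfl fun j _ => Finset.sum_congr rfl fun l _ => by ring
    _ = ∑ l ∈ range (i + 1), (if i = l then (1 : R) else 0) * (P l k + x * P l (k + 1)) := by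
        exact Finset.sum_congr rfl fun l _ => by rw [hdelta]
    _ = P i k + x * P i (k + 1) := by
        simp [Finset.sum_ite_eq]
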